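/- Let D and D⁺ be closed disks both having p on their boundary, with centers on a common ray u[p] from p, with D ⊆ D⁺, and let q ∈ ∂D ∩ int D⁺. Let ℓ′ be any line through q. Then the chord D ∩ ℓ′ is contained in the chord D⁺ ∩ ℓ′; moreover, the angle between ℓ′ and the tangent to D at q equals the inscribed angle at which p sees the chord D ∩ ℓ′, and this angle is at most the angle at which p sees the chord D⁺ ∩ ℓ′. -/

import Mathlib

open Real EuclideanGeometry
open scoped RealInnerProductSpace

abbrev E2 : Type := EuclideanSpace ℝ (Fin 2)

section Aux

/-- Points parametrized along a line, with ordered parameters, are in betweenness order. -/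
lemma aux_wbtw_param (q d : E2) {t1 t2 t3 : ℝ} (h1 : t1 ≤ t2) (h2 : t2 ≤ t3) :
    Wbtw ℝ (q + t1 • d) (q + t2 • d) (q + t3 • d) := by
  rcases eq_or_lt_of_le (h1.trans h2) with h13 | h13
  · have ht : t2 = t1 := le_antisymm (h13 ▸ h2) h1
    rw [ht]
    exact wbtw_self_left ℝ _ _
  · rw [← mem_segment_iff_wbtw]
    have h31 : t3 - t1 ≠ 0 := ne_of_gt (sub_pos.2 h13)
    refine ⟨(t3 - t2) / (t3 - t1), (t2 - t1) / (t3 - t1),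
      div_nonneg (by linarith) (by linarith), div_nonneg (by linarith) (by linarith),
      by field_simp; ring, ?_⟩
    have ha' : (t3 - t2) / (t3 - t1) + (t2 - t1) / (t3 - t1) = 1 := by field_simp; ring
    have hb' : (t3 - t2) / (t3 - t1) * t1 + (t2 - t1) / (t3 - t1) * t3 = t2 := by
      field_simp; ring
    have key : ∀ a b : ℝ, a • (q + t1 • d) + b • (q + t3 • d)
        = (a + b) • q + (a * t1 + b * t3) • d := by
      intro a b
      rw [smul_add, smul_add, smul_smul, smul_smul, add_smul, add_smul]
      abel
    rw [key, ha', hb', one_smul]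

/-- If `y` is weakly between `x` and `z`, the angle subtended at any point `p` by `x` and `y`
is at most that subtended by `x` and `z`. -/
lemma aux_angle_le_of_wbtw {V : Type*} {P : Type*} [NormedAddCommGroup V]
    [InnerProductSpace ℝ V] [MetricSpace P] [NormedAddTorsor V P]
    [Fact (Module.finrank ℝ V = 2)] [Module.Oriented ℝ V (Fin 2)]
    {x y z : P} (p : P) (h : Wbtw ℝ x y z) : ∠ x p y ≤ ∠ x p z := by
  by_cases hxp : x = p
  · rw [hxp, EuclideanGeometry.angle_self_left, EuclideanGeometry.angle_self_left]
  by_cases hyp : y = p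
  · rw [hyp] at h
    rw [hyp, EuclideanGeometry.angle_self_right]
    by_cases hzp : z = p
    · rw [hzp, EuclideanGeometry.angle_self_right]
    · have hsb : Sbtw ℝ x p z := ⟨h, Ne.symm hxp, Ne.symm hzp⟩
      rw [hsb.angle₁₂₃_eq_pi]
      linarith [Real.pi_pos]
  by_cases hzp : z = p
  · rw [hzp] at h
    rw [hzp, EuclideanGeometry.angle_self_right, EuclideanGeometry.angle_comm,
      h.angle₂₃₁_eq_zero_of_ne hyp]
    linarith [Real.pi_pos]
  by_cases hxy : x = y
  · rw [← hxy, EuclideanGeometry.angle_self_of_ne hxp]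
    exact EuclideanGeometry.angle_nonneg _ _ _
  by_cases hyz : y = z
  · rw [hyz]
  have hxz : x ≠ z := by
    rintro rfl
    exact hxy ((wbtw_self_iff ℝ).1 h).symm
  have hcol' := h.collinear
  have hcol1 : Collinear ℝ ({x, y, x, z} : Set P) := by
    have hset : ({x, y, x, z} : Set P) = {x, y, z} := by
      ext w; simp only [Set.mem_insert_iff, Set.mem_singleton_iff]; tauto
    rw [hset]; exact hcol'
  have hcol2 : Collinear ℝ ({y, z, x, z} : Set P) := by
    have hset : ({y, z, x, z} : Set P) = {x, y, z} := by
      ext w; simp only [Set.mem_insert_iff, Set.mem_singleton_iff]; tauto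
    rw [hset]; exact hcol'
  have hray1 : SameRay ℝ (y -ᵥ x) (z -ᵥ x) := h.sameRay_vsub_left
  have hray2 : SameRay ℝ (z -ᵥ y) (z -ᵥ x) := h.sameRay_vsub_right.symm
  have hs1 : (∡ x p y).sign = (∡ x p z).sign :=
    Collinear.oangle_sign_of_sameRay_vsub p hxy hxz hcol1 hray1
  have hs2 : (∡ y p z).sign = (∡ x p z).sign :=
    Collinear.oangle_sign_of_sameRay_vsub p hyz hxz hcol2 hray2
  have hadd : ∡ x p y + ∡ y p z = ∡ x p z :=
    EuclideanGeometry.oangle_add hxp hyp hzp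
  have hfinish : ∠ x p y ≠ π → ∠ y p z ≠ π →
      (↑(∠ x p y + ∠ y p z) : Real.Angle) = ↑(∠ x p z) → ∠ x p y ≤ ∠ x p z := by
    intro hne1 hne2 hcoe
    obtain ⟨k, hk⟩ := Real.Angle.angle_eq_iff_two_pi_dvd_sub.1 hcoe
    have ha1 := EuclideanGeometry.angle_nonneg x p y
    have ha2 := EuclideanGeometry.angle_nonneg y p z
    have ha3 := EuclideanGeometry.angle_nonneg x p z
    have hb1 := lt_of_le_of_ne (EuclideanGeometry.angle_le_pi x p y) hne1
    have hb2 := lt_of_le_of_ne (EuclideanGeometry.angle_le_pi y p z) hne2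
    have hb3 := EuclideanGeometry.angle_le_pi x p z
    have hπ := Real.pi_pos
    have hklt : (k : ℝ) < 1 := by nlinarith
    have hkgt : (-1 : ℝ) < (k : ℝ) := by nlinarith
    have hk0 : k = 0 := by
      have h1 : k < 1 := by exact_mod_cast hklt
      have h2 : -1 < k := by exact_mod_cast hkgt
      omega
    rw [hk0] at hk
    push_cast at hk
    linarith
  cases h' : (∡ x p z).sign
  · -- sign = zero
    have hs1' : (∡ x p y).sign = 0 := by rw [hs1, h']; rfl
    rcases EuclideanGeometry.eq_zero_or_angle_eq_zero_or_pi_of_sign_oangle_eq_zero hs1' with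
      h1 | h1 | h1 | h1
    · exact absurd h1 hxp
    · exact absurd h1 hyp
    · rw [h1]; exact EuclideanGeometry.angle_nonneg _ _ _
    · have hsb : Sbtw ℝ x p y := EuclideanGeometry.angle_eq_pi_iff_sbtw.1 h1
      have hw : Wbtw ℝ x p z := h.trans_left hsb.wbtw
      have hsb2 : Sbtw ℝ x p z := ⟨hw, hsb.2.1, Ne.symm hzp⟩
      rw [h1, hsb2.angle₁₂₃_eq_pi]
  · -- sign = neg (-1)
    have hs1' : (∡ x p y).sign = -1 := by rw [hs1, h']; rfl
    have hs2' : (∡ y p z).sign = -1 := by rw [hs2, h']; rfl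
    have hs3' : (∡ x p z).sign = -1 := by rw [h']; rfl
    have e1 := EuclideanGeometry.oangle_eq_neg_angle_of_sign_eq_neg_one hs1'
    have e2 := EuclideanGeometry.oangle_eq_neg_angle_of_sign_eq_neg_one hs2'
    have e3 := EuclideanGeometry.oangle_eq_neg_angle_of_sign_eq_neg_one hs3'
    have hne1 : ∠ x p y ≠ π := by
      intro hpi
      rw [e1, hpi, Real.Angle.neg_coe_pi, Real.Angle.sign_coe_pi] at hs1'
      exact absurd hs1' (by decide)
    have hne2 : ∠ y p z ≠ π := by
      intro hpi
      rw [e2, hpi, Real.Angle.neg_coe_pi, Real.Angle.sign_coe_pi] at hs2'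
      exact absurd hs2' (by decide)
    refine hfinish hne1 hne2 ?_
    rw [e1, e2, e3] at hadd
    rw [← neg_add] at hadd
    have := neg_injective hadd
    rw [Real.Angle.coe_add]
    exact this
  · -- sign = pos (1)
    have hs1' : (∡ x p y).sign = 1 := by rw [hs1, h']; rfl
    have hs2' : (∡ y p z).sign = 1 := by rw [hs2, h']; rfl
    have hs3' : (∡ x p z).sign = 1 := by rw [h']; rfl
    have e1 := EuclideanGeometry.oangle_eq_angle_of_sign_eq_one hs1'
    have e2 := EuclideanGeometry.oangle_eq_angle_of_sign_eq_one hs2'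
    have e3 := EuclideanGeometry.oangle_eq_angle_of_sign_eq_one hs3'
    have hne1 : ∠ x p y ≠ π := by
      intro hpi
      rw [e1, hpi, Real.Angle.sign_coe_pi] at hs1'
      exact absurd hs1' (by decide)
    have hne2 : ∠ y p z ≠ π := by
      intro hpi
      rw [e2, hpi, Real.Angle.sign_coe_pi] at hs2'
      exact absurd hs2' (by decide)
    refine hfinish hne1 hne2 ?_
    rw [e1, e2, e3] at hadd
    rw [Real.Angle.coe_add]
    exact hadd

private lemma aux_hrA {n3 r A : ℝ} (h2r : n3 ^ 2 = 2 * r * (r - A)) (hn3 : 0 < n3)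
    (hr : 0 < r) : A < r := by
  by_contra hcon
  push_neg at hcon
  nlinarith [pow_pos hn3 2, mul_nonneg hr.le (sub_nonneg.2 hcon)]

private lemma aux_hK {s Y A B X r n3 : ℝ} (hs : 0 < s) (hrA : A < r)
    (hn3sq : n3 ^ 2 = (A - r) ^ 2 + B ^ 2)
    (h : s * Y * n3 ^ 2 ≤ ((X - r) * (A - r) + Y * B) * (s * B)) :
    0 ≤ Y * (A - r) - B * (X - r) := by
  have h3 : Y * n3 ^ 2 ≤ ((X - r) * (A - r) + Y * B) * B := by nlinarith
  rw [hn3sq] at h3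
  have h4 : (A - r) * (Y * (A - r) - B * (X - r)) ≤ 0 := by nlinarith
  by_contra hcon
  push_neg at hcon
  nlinarith [mul_pos (sub_pos.2 hrA) (neg_pos.2 hcon)]

private lemma aux_hrA2 {A B r : ℝ} (hAB : A ^ 2 + B ^ 2 = r ^ 2) (hrA : A < r) :
    0 ≤ r + A := by nlinarith [sq_nonneg B]

private lemma aux_keyEq {L n1 n2 n3 B : ℝ} (hsq : (L * n3) ^ 2 = (B * (n1 * n2)) ^ 2)
    (hprod : 0 ≤ L * n3 * (B * (n1 * n2))) : L * n3 = B * (n1 * n2) := by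
  have hdiff : (L * n3 - B * (n1 * n2)) * (L * n3 + B * (n1 * n2)) = 0 := by
    linear_combination hsq
  rcases mul_eq_zero.1 hdiff with h5 | h5
  · linarith [sub_eq_zero.1 h5]
  · have h6 : B * (n1 * n2) = 0 := by nlinarith [sq_nonneg (B * (n1 * n2))]
    nlinarith

private lemma aux_between {ta tb t0 : ℝ} (hord : ta ≤ tb) (h : (t0 - ta) * (t0 - tb) ≤ 0) :
    ta ≤ t0 ∧ t0 ≤ tb := by
  constructor
  · by_contra hcon
    push_neg at hcon
    nlinarith [mul_pos (sub_pos.2 hcon) (sub_pos.2 (lt_of_lt_of_le hcon hord))]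
  · by_contra hcon
    push_neg at hcon
    nlinarith [mul_pos (sub_pos.2 hcon) (sub_pos.2 (lt_of_le_of_lt hord hcon))]

end Aux

set_option maxHeartbeats 1000000 in
/-- Let `D = closedBall c r` and `D⁺ = closedBall c' r'` be internally tangent at `p` (both
centers on the ray from `p` in the unit direction `u`, `r ≤ r'`, so `D ⊆ D⁺`), and let
`q ∈ ∂D ∩ int D⁺`. Let `ℓ'` be the line through `q` with direction `d`, meeting `∂D` again at
`q'` and meeting `∂D⁺` at the chord endpoints `a`, `b`. Let `τ` be a direction of the tangent
to `D` at `q` (`⟪τ, q − c⟫ = 0`), chosen on the opposite side of the line `qq'` from `p`.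
Then: the chord `D ∩ ℓ'` is contained in the chord `D⁺ ∩ ℓ' = [a, b]`; the angle between `ℓ'`
and the tangent to `D` at `q` equals the inscribed angle `∠ q' p q` at which `p` sees the
chord `D ∩ ℓ'`; and this angle is at most the angle `∠ a p b` at which `p` sees the chord
`D⁺ ∩ ℓ'`. -/
theorem stmt_17 (p q q' a b u d τ c c' : E2) (r r' : ℝ)
    (hu : ‖u‖ = 1) (hr : 0 < r) (hrr' : r ≤ r')
    (hc : c = p + r • u) (hc' : c' = p + r' • u)
    (hq : dist q c = r) (hq' : dist q' c = r) (hqint : dist q c' < r')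
    (hpq : p ≠ q) (hpq' : p ≠ q') (hqq' : q ≠ q')
    (hd : d ≠ 0)
    (hq'line : ∃ t : ℝ, q' = q + t • d)
    (ha : dist a c' = r') (hb : dist b c' = r')
    (haline : ∃ t : ℝ, a = q + t • d) (hbline : ∃ t : ℝ, b = q + t • d) (hab : a ≠ b)
    (hτ : τ ≠ 0) (hτtan : ⟪τ, q - c⟫ = 0)
    (hτside : ⟪τ, (p - q) - (⟪p - q, q' - q⟫ / ‖q' - q‖ ^ 2) • (q' - q)⟫ ≤ 0) :
    (∀ w ∈ Metric.closedBall c r, (∃ t : ℝ, w = q + t • d) → w ∈ segment ℝ a b) ∧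
    ∠ q' p q = InnerProductGeometry.angle (q' - q) τ ∧
    ∠ q' p q ≤ ∠ a p b := by
  haveI : Fact (Module.finrank ℝ E2 = 2) := ⟨finrank_euclideanSpace_fin⟩
  haveI : Module.Oriented ℝ E2 (Fin 2) :=
    ⟨(EuclideanSpace.basisFun (Fin 2) ℝ).toBasis.orientation⟩
  obtain ⟨ta, hta⟩ := haline
  obtain ⟨tb, htb⟩ := hbline
  obtain ⟨t', ht'⟩ := hq'line
  -- basic distance facts
  have hr' : (0:ℝ) < r' := lt_of_lt_of_le hr hrr'
  have hdcc' : dist c c' = r' - r := by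
    rw [hc, hc', dist_eq_norm,
      show p + r • u - (p + r' • u) = (r - r') • u by rw [sub_smul]; abel,
      norm_smul, hu, Real.norm_eq_abs, abs_sub_comm, abs_of_nonneg (sub_nonneg.2 hrr')]
    ring
  have hwc' : ∀ w : E2, dist w c ≤ r → dist w c' ≤ r' := by
    intro w hw
    calc dist w c' ≤ dist w c + dist c c' := dist_triangle _ _ _
    _ ≤ r + (r' - r) := by rw [hdcc']; linarith
    _ = r' := by ring
  -- quadratic along the line
  set Q : ℝ := ‖q - c'‖ ^ 2 with hQ
  set P : ℝ := ⟪q - c', d⟫ with hP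
  set Dn : ℝ := ‖d‖ ^ 2 with hDn
  have hDnpos : 0 < Dn := by rw [hDn]; exact pow_pos (norm_pos_iff.2 hd) 2
  have expand : ∀ t : ℝ, dist (q + t • d) c' ^ 2 = Q + 2 * (t * P) + t ^ 2 * Dn := by
    intro t
    rw [dist_eq_norm, add_sub_right_comm q (t • d) c', norm_add_sq_real,
      real_inner_smul_right, norm_smul, Real.norm_eq_abs, mul_pow, sq_abs]
    try ring
  have ea : Q + 2 * (ta * P) + ta ^ 2 * Dn = r' ^ 2 := by
    have h := expand ta
    rw [← hta, ha] at h
    linarith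
  have eb : Q + 2 * (tb * P) + tb ^ 2 * Dn = r' ^ 2 := by
    have h := expand tb
    rw [← htb, hb] at h
    linarith
  have htab : ta ≠ tb := by
    intro h
    exact hab (by rw [hta, htb, h])
  have hPt : 2 * P = -(ta + tb) * Dn := by
    have h2 : (ta - tb) * (2 * P + (ta + tb) * Dn) = 0 := by linear_combination ea - eb
    rcases mul_eq_zero.1 h2 with h3 | h3
    · exact absurd (sub_eq_zero.1 h3) htab
    · linarith
  have hbetween : ∀ t : ℝ, dist (q + t • d) c' ≤ r' → (t - ta) * (t - tb) ≤ 0 := by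
    intro t ht
    have h1 : dist (q + t • d) c' ^ 2 ≤ r' ^ 2 := by
      nlinarith [dist_nonneg (x := q + t • d) (y := c'), ht]
    rw [expand t] at h1
    have h3 : 2 * P * t = -(ta + tb) * Dn * t := by linear_combination t * hPt
    have h4 : 2 * P * ta = -(ta + tb) * Dn * ta := by linear_combination ta * hPt
    by_contra hcon
    push_neg at hcon
    nlinarith [h1, ea, h3, h4, mul_pos hDnpos hcon]
  -- Part 1
  have part1 : ∀ w ∈ Metric.closedBall c r, (∃ t : ℝ, w = q + t • d) → w ∈ segment ℝ a b := by
    intro w hw hwl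
    obtain ⟨t, rfl⟩ := hwl
    have hbt := hbetween t (hwc' _ (Metric.mem_closedBall.1 hw))
    rcases le_total ta tb with hord | hord
    · obtain ⟨h1, h2⟩ := aux_between hord hbt
      rw [hta, htb]
      exact (aux_wbtw_param q d h1 h2).mem_segment
    · rw [mul_comm] at hbt
      obtain ⟨h1, h2⟩ := aux_between hord hbt
      rw [hta, htb, segment_symm]
      exact (aux_wbtw_param q d h1 h2).mem_segment
  refine ⟨part1, ?_, ?_⟩
  -- Part 2: tangent-chord angle
  · -- orthonormal frame
    have hqc : ‖q - c‖ = r := by rw [← dist_eq_norm]; exact hq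
    have hq'c : ‖q' - c‖ = r := by rw [← dist_eq_norm]; exact hq'
    have hpc : ‖p - c‖ = r := by
      rw [show p - c = -(r • u) by rw [hc]; abel, norm_neg, norm_smul, hu, Real.norm_eq_abs,
        abs_of_pos hr]
      ring
    have hτtan' : ⟪q - c, τ⟫ = 0 := by rw [real_inner_comm]; exact hτtan
    obtain ⟨s, hsdef⟩ : ∃ x : ℝ, ‖τ‖ = x := ⟨_, rfl⟩
    have hspos : 0 < s := hsdef ▸ norm_pos_iff.2 hτ
    obtain ⟨n1, hn1def⟩ : ∃ x : ℝ, ‖q' - p‖ = x := ⟨_, rfl⟩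
    obtain ⟨n2, hn2def⟩ : ∃ x : ℝ, ‖q - p‖ = x := ⟨_, rfl⟩
    obtain ⟨n3, hn3def⟩ : ∃ x : ℝ, ‖q' - q‖ = x := ⟨_, rfl⟩
    have hn1pos : 0 < n1 := hn1def ▸ norm_pos_iff.2 (sub_ne_zero_of_ne hpq'.symm)
    have hn2pos : 0 < n2 := hn2def ▸ norm_pos_iff.2 (sub_ne_zero_of_ne hpq.symm)
    have hn3pos : 0 < n3 := hn3def ▸ norm_pos_iff.2 (sub_ne_zero_of_ne hqq'.symm)
    obtain ⟨e₁, he₁⟩ : ∃ v : E2, r⁻¹ • (q - c) = v := ⟨_, rfl⟩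
    obtain ⟨e₂, he₂⟩ : ∃ v : E2, (‖τ‖)⁻¹ • τ = v := ⟨_, rfl⟩
    have i11 : ⟪e₁, e₁⟫ = 1 := by
      rw [← he₁, real_inner_smul_left, real_inner_smul_right, real_inner_self_eq_norm_sq, hqc]
      field_simp
    have i22 : ⟪e₂, e₂⟫ = 1 := by
      rw [← he₂, real_inner_smul_left, real_inner_smul_right, real_inner_self_eq_norm_sq]
      have : ‖τ‖ ≠ 0 := ne_of_gt (hsdef ▸ hspos)
      field_simp
    have i12 : ⟪e₁, e₂⟫ = 0 := by
      rw [← he₁, ← he₂, real_inner_smul_left, real_inner_smul_right, hτtan']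
      ring
    have i21 : ⟪e₂, e₁⟫ = 0 := by rw [real_inner_comm, i12]
    have ne1 : ‖e₁‖ = 1 := by
      have h := real_inner_self_eq_norm_sq e₁
      rw [i11] at h
      nlinarith [norm_nonneg e₁]
    have ne2 : ‖e₂‖ = 1 := by
      have h := real_inner_self_eq_norm_sq e₂
      rw [i22] at h
      nlinarith [norm_nonneg e₂]
    have horm : Orthonormal ℝ ![e₁, e₂] := by
      rw [orthonormal_iff_ite]
      intro i j
      fin_cases i <;> fin_cases j <;>
        simp [i11, i12, i21, i22, ne1, ne2]
    have hcard : Fintype.card (Fin 2) = Module.finrank ℝ E2 := by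
      simp [finrank_euclideanSpace_fin]
    have hbascoe := coe_basisOfOrthonormalOfCardEqFinrank horm hcard
    have inner_eq : ∀ x y : E2, ⟪x, y⟫ = ⟪x, e₁⟫ * ⟪y, e₁⟫ + ⟪x, e₂⟫ * ⟪y, e₂⟫ := by
      intro x y
      have horm' : Orthonormal ℝ (⇑(basisOfOrthonormalOfCardEqFinrank horm hcard)) := by
        rwa [hbascoe]
      have h := ((basisOfOrthonormalOfCardEqFinrank horm hcard).toOrthonormalBasis
        horm').sum_inner_mul_inner x y
      rw [Fin.sum_univ_two] at h
      have h0 : (basisOfOrthonormalOfCardEqFinrank horm hcard).toOrthonormalBasis horm' 0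
          = e₁ := by
        rw [Module.Basis.coe_toOrthonormalBasis, hbascoe]; simp
      have h1 : (basisOfOrthonormalOfCardEqFinrank horm hcard).toOrthonormalBasis horm' 1
          = e₂ := by
        rw [Module.Basis.coe_toOrthonormalBasis, hbascoe]; simp
      rw [h0, h1] at h
      rw [← h, real_inner_comm e₁ y, real_inner_comm e₂ y]
    -- coordinates
    obtain ⟨A, hA⟩ : ∃ x : ℝ, ⟪q' - c, e₁⟫ = x := ⟨_, rfl⟩
    obtain ⟨B, hB⟩ : ∃ x : ℝ, ⟪q' - c, e₂⟫ = x := ⟨_, rfl⟩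
    obtain ⟨X, hX⟩ : ∃ x : ℝ, ⟪p - c, e₁⟫ = x := ⟨_, rfl⟩
    obtain ⟨Y, hY⟩ : ∃ x : ℝ, ⟪p - c, e₂⟫ = x := ⟨_, rfl⟩
    have hq1 : ⟪q - c, e₁⟫ = r := by
      rw [← he₁, real_inner_smul_right, real_inner_self_eq_norm_sq, hqc]
      field_simp
    have hq2 : ⟪q - c, e₂⟫ = 0 := by
      rw [← he₂, real_inner_smul_right, hτtan']
      ring
    have hτ1 : ⟪τ, e₁⟫ = 0 := by
      rw [← he₁, real_inner_smul_right, hτtan]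
      ring
    have hτ2 : ⟪τ, e₂⟫ = s := by
      rw [← he₂, real_inner_smul_right, real_inner_self_eq_norm_sq, hsdef]
      have hs0 : s ≠ 0 := ne_of_gt hspos
      field_simp
    -- circle equations
    have hAB : A ^ 2 + B ^ 2 = r ^ 2 := by
      have h := inner_eq (q' - c) (q' - c)
      rw [real_inner_self_eq_norm_sq, hq'c, hA, hB] at h
      linear_combination -h
    have hXY : X ^ 2 + Y ^ 2 = r ^ 2 := by
      have h := inner_eq (p - c) (p - c)
      rw [real_inner_self_eq_norm_sq, hpc, hX, hY] at h
      linear_combination -h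
    -- coordinates of difference vectors
    have d1 : q' - p = (q' - c) - (p - c) := by abel
    have d2 : q - p = (q - c) - (p - c) := by abel
    have d3 : q' - q = (q' - c) - (q - c) := by abel
    have d4 : p - q = (p - c) - (q - c) := by abel
    have cq'p₁ : ⟪q' - p, e₁⟫ = A - X := by rw [d1, inner_sub_left, hA, hX]
    have cq'p₂ : ⟪q' - p, e₂⟫ = B - Y := by rw [d1, inner_sub_left, hB, hY]
    have cqp₁ : ⟪q - p, e₁⟫ = r - X := by rw [d2, inner_sub_left, hq1, hX]
    have cqp₂ : ⟪q - p, e₂⟫ = 0 - Y := by rw [d2, inner_sub_left, hq2, hY]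
    have cq'q₁ : ⟪q' - q, e₁⟫ = A - r := by rw [d3, inner_sub_left, hA, hq1]
    have cq'q₂ : ⟪q' - q, e₂⟫ = B - 0 := by rw [d3, inner_sub_left, hB, hq2]
    have cpq₁ : ⟪p - q, e₁⟫ = X - r := by rw [d4, inner_sub_left, hX, hq1]
    have cpq₂ : ⟪p - q, e₂⟫ = Y - 0 := by rw [d4, inner_sub_left, hY, hq2]
    -- inner products in coordinates
    have I1 : ⟪q' - p, q - p⟫ = (A - X) * (r - X) + (B - Y) * (0 - Y) := by
      rw [inner_eq, cq'p₁, cq'p₂, cqp₁, cqp₂]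
    have I2 : n1 ^ 2 = (A - X) ^ 2 + (B - Y) ^ 2 := by
      rw [← hn1def, ← real_inner_self_eq_norm_sq, inner_eq, cq'p₁, cq'p₂]
      ring
    have I3 : n2 ^ 2 = (r - X) ^ 2 + (0 - Y) ^ 2 := by
      rw [← hn2def, ← real_inner_self_eq_norm_sq, inner_eq, cqp₁, cqp₂]
      ring
    have I4 : n3 ^ 2 = (A - r) ^ 2 + B ^ 2 := by
      rw [← hn3def, ← real_inner_self_eq_norm_sq, inner_eq, cq'q₁, cq'q₂]
      ring
    have I5 : ⟪q' - q, τ⟫ = B * s := by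
      rw [inner_eq, hτ1, hτ2, cq'q₁, cq'q₂]
      ring
    have I6 : ⟪τ, p - q⟫ = s * Y := by
      rw [real_inner_comm, inner_eq, hτ1, hτ2, cpq₁, cpq₂]
      ring
    have I7 : ⟪p - q, q' - q⟫ = (X - r) * (A - r) + Y * B := by
      rw [inner_eq, cpq₁, cpq₂, cq'q₁, cq'q₂]
      ring
    have I5' : ⟪τ, q' - q⟫ = s * B := by rw [real_inner_comm, I5]; ring
    -- A < r
    have h2r : n3 ^ 2 = 2 * r * (r - A) := by linear_combination I4 + hAB
    have hrA : A < r := aux_hrA h2r hn3pos hr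
    -- side condition: K ≥ 0
    have hside' := hτside
    rw [inner_sub_right, real_inner_smul_right, I6, I5', I7, hn3def] at hside'
    have hn3sqpos : 0 < n3 ^ 2 := pow_pos hn3pos 2
    rw [div_mul_eq_mul_div, sub_nonpos, le_div_iff₀ hn3sqpos] at hside'
    have hK : 0 ≤ Y * (A - r) - B * (X - r) := aux_hK hspos hrA I4 hside'
    -- key identities
    have hLB : ((A - X) * (r - X) + (B - Y) * (0 - Y)) * B
        = (Y * (A - r) - B * (X - r)) * (r + A) := by
      linear_combination (-Y) * hAB + B * hXY
    have keySq : (((A - X) * (r - X) + (B - Y) * (0 - Y)) * n3) ^ 2 = (B * (n1 * n2)) ^ 2 := by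
      rw [mul_pow, mul_pow, mul_pow, I4, I2, I3]
      linear_combination
        (2*r^4 - 4*Y^2*r^2 + Y^4 + 2*X*Y^2*r - 5*X^2*r^2 + 2*X^2*Y^2 + 2*X^3*r + X^4
          + 4*B*Y*r^2 - 2*B*Y^3 - 2*B*X*Y*r - 2*B*X^2*Y - B^2*r^2 + 2*B^2*X*r - B^2*X^2
          - 2*A*r^3 + 2*A*Y^2*r + 2*A*X*r^2 - 2*A*X*Y^2 + 2*A*X^2*r - 2*A*X^3
          - 2*A*B*Y*r + 2*A*B*X*Y + A^2*r^2 - 2*A^2*X*r + A^2*X^2) * hAB +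
        (-2*r^4 + 2*Y^2*r^2 + 2*X^2*r^2 - 4*B*Y*r^2 + 3*B^2*r^2 - B^2*Y^2 - 2*B^2*X*r
          - B^2*X^2 + 2*B^3*Y + 2*A*r^3 - 2*A*Y^2*r - 2*A*X^2*r + 4*A*B*Y*r
          - 2*A*B^2*r + 2*A*B^2*X) * hXY
    have hrA2 : 0 ≤ r + A := aux_hrA2 hAB hrA
    have hLBnn : 0 ≤ ((A - X) * (r - X) + (B - Y) * (0 - Y)) * B := by
      rw [hLB]
      exact mul_nonneg hK hrA2
    have hprod : 0 ≤ (((A - X) * (r - X) + (B - Y) * (0 - Y)) * n3) * (B * (n1 * n2)) := by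
      have hre : (((A - X) * (r - X) + (B - Y) * (0 - Y)) * n3) * (B * (n1 * n2))
          = (((A - X) * (r - X) + (B - Y) * (0 - Y)) * B) * (n3 * (n1 * n2)) := by ring
      rw [hre]
      exact mul_nonneg hLBnn (by positivity)
    have keyEq : ((A - X) * (r - X) + (B - Y) * (0 - Y)) * n3 = B * (n1 * n2) :=
      aux_keyEq keySq hprod
    -- conclude angle equality
    show InnerProductGeometry.angle (q' -ᵥ p) (q -ᵥ p) = InnerProductGeometry.angle (q' - q) τ
    rw [vsub_eq_sub, vsub_eq_sub]
    unfold InnerProductGeometry.angle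
    congr 1
    rw [I1, I5, hn1def, hn2def, hn3def, hsdef]
    rw [div_eq_div_iff (by positivity) (by positivity)]
    linear_combination s * keyEq
  -- Part 3
  · have h00 : (0 - ta) * (0 - tb) ≤ 0 := by
      have h := hbetween 0 (by simpa using hqint.le)
      simpa using h
    have hq't : (t' - ta) * (t' - tb) ≤ 0 := by
      apply hbetween
      rw [← ht']
      exact hwc' q' hq'.le
    have main : ∀ w v : E2, Wbtw ℝ q q' w → Wbtw ℝ w q v → ∠ q' p q ≤ ∠ w p v := by
      intro w v h1 h2
      calc ∠ q' p q = ∠ q p q' := EuclideanGeometry.angle_comm _ _ _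
        _ ≤ ∠ q p w := aux_angle_le_of_wbtw p h1
        _ = ∠ w p q := EuclideanGeometry.angle_comm _ _ _
        _ ≤ ∠ w p v := aux_angle_le_of_wbtw p h2
    have hq0 : q = q + (0:ℝ) • d := by simp
    rcases le_total ta tb with hord | hord
    · obtain ⟨hta0, h0tb⟩ := aux_between hord h00
      obtain ⟨htat', ht'tb⟩ := aux_between hord hq't
      have w2 : Wbtw ℝ a q b := by
        have h := aux_wbtw_param q d hta0 h0tb
        rwa [← hq0, ← hta, ← htb] at h
      rcases le_total t' 0 with h'0 | h'0
      · have w1 : Wbtw ℝ q q' a := by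
          have h := (aux_wbtw_param q d htat' h'0).symm
          rwa [← hq0, ← ht', ← hta] at h
        exact main a b w1 w2
      · have w1 : Wbtw ℝ q q' b := by
          have h := aux_wbtw_param q d h'0 ht'tb
          rwa [← hq0, ← ht', ← htb] at h
        calc ∠ q' p q ≤ ∠ b p a := main b a w1 w2.symm
          _ = ∠ a p b := EuclideanGeometry.angle_comm _ _ _
    · rw [mul_comm] at h00 hq't
      obtain ⟨htb0, h0ta⟩ := aux_between hord h00
      obtain ⟨htbt', ht'ta⟩ := aux_between hord hq't
      have w2 : Wbtw ℝ b q a := by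
        have h := aux_wbtw_param q d htb0 h0ta
        rwa [← hq0, ← hta, ← htb] at h
      rcases le_total t' 0 with h'0 | h'0
      · have w1 : Wbtw ℝ q q' b := by
          have h := (aux_wbtw_param q d htbt' h'0).symm
          rwa [← hq0, ← ht', ← htb] at h
        calc ∠ q' p q ≤ ∠ b p a := main b a w1 w2
          _ = ∠ a p b := EuclideanGeometry.angle_comm _ _ _
      · have w1 : Wbtw ℝ q q' a := by
          have h := aux_wbtw_param q d h'0 ht'ta
          rwa [← hq0, ← ht', ← hta] at h
        exact main a b w1 w2.symm
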